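/- Let α ∈ ℂ, set (x,y) := (1,α)/√(1+|α|²), and let K be a hermitian 2×2 complex matrix. For nonzero z ∈ ℂ define D_{Y,K}(z) as the determinant of the 2×2 matrix whose first row is the row vector (−conj(y), conj(x))·𝓜(z)·𝓑(z) and whose second row is the row vector (conj(x), conj(y))·(K·𝓜(z)·𝓑(z) − 𝓒(z)). Then there exist a constant C > 0 and N ∈ ℕ such that for every integer k ≥ N, the function D_{Y,K} has exactly one zero in the open disc {z ∈ ℂ : |z − kπ| < C/k}. In particular the corresponding eigenvalue parameters satisfy λ_k = kπ + O(1/k). -/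

import Mathlib

/-- `𝓜(z)` -/
noncomputable def MmatC (z : ℂ) : Matrix (Fin 2) (Fin 2) ℂ :=
  !![1/z, 0; 0, 1/z^2]

/-- `𝓑(z)` -/
noncomputable def BmatC (z : ℂ) : Matrix (Fin 2) (Fin 2) ℂ :=
  !![Complex.sin z, 1 - Complex.cos z;
     1 - Complex.cos z, z - Complex.sin z]

/-- `𝓒(z)` -/
noncomputable def CmatC (z : ℂ) : Matrix (Fin 2) (Fin 2) ℂ :=
  !![z * Complex.sin z - Complex.cos z, z * (1 - Complex.cos z) - Complex.sin z;
     Complex.cos z - 1, Complex.sin z]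

/-- `D_{Y,K}(z)`: determinant of the matrix whose first row is
`(−conj y, conj x)·𝓜(z)𝓑(z)` and second row is `(conj x, conj y)·(K𝓜(z)𝓑(z) − 𝓒(z))`. -/
noncomputable def DYK (K : Matrix (Fin 2) (Fin 2) ℂ) (x y : ℂ) (z : ℂ) : ℂ :=
  (Matrix.of
    ![Matrix.vecMul ![-(starRingEnd ℂ y), (starRingEnd ℂ) x] (MmatC z * BmatC z),
      Matrix.vecMul ![(starRingEnd ℂ) x, (starRingEnd ℂ) y]
        (K * (MmatC z * BmatC z) - CmatC z)]).det

/-- The entire function `z^4 · D_{Y,K}(z)` written explicitly. -/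
noncomputable def Ffun (Q s2 m4 : ℂ) (z : ℂ) : ℂ :=
  Q * z * (2*(1 - Complex.cos z) - z * Complex.sin z)
  + s2 * ((z^4 + z^2) * Complex.sin z) + s2 * z^3 * (Complex.cos z - 2)
  + m4 * (z^3 * (1 - Complex.cos z))

lemma DYK_mul_z4 (K : Matrix (Fin 2) (Fin 2) ℂ) (x y z : ℂ) (hz : z ≠ 0) :
    DYK K x y z * z ^ 4 =
      Ffun (K 0 0 * ((starRingEnd ℂ) x)^2
        + (K 0 1 + K 1 0) * ((starRingEnd ℂ) x) * ((starRingEnd ℂ) y)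
        + K 1 1 * ((starRingEnd ℂ) y)^2)
        (((starRingEnd ℂ) x)^2)
        (2*(((starRingEnd ℂ) y)^2 - ((starRingEnd ℂ) x) * ((starRingEnd ℂ) y))) z := by
  have pyth := Complex.sin_sq_add_cos_sq z
  simp only [DYK, MmatC, BmatC, CmatC, Ffun, Matrix.det_fin_two, Matrix.vecMul,
    dotProduct, Fin.sum_univ_two, Matrix.mul_apply, Matrix.sub_apply,
    Matrix.of_apply, Matrix.cons_val', Matrix.cons_val_zero, Matrix.cons_val_one,
    Matrix.head_cons, Matrix.empty_val', Matrix.cons_val_fin_one, Matrix.head_fin_const]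
  field_simp
  linear_combination ((K 0 0 * ((starRingEnd ℂ) x)^2
        + (K 0 1 + K 1 0) * ((starRingEnd ℂ) x) * ((starRingEnd ℂ) y)
        + K 1 1 * ((starRingEnd ℂ) y)^2) * z
    + (((starRingEnd ℂ) y)^2 - ((starRingEnd ℂ) x)*((starRingEnd ℂ) y)
       - ((starRingEnd ℂ) x)^2) * z^3) * pyth

/-- Derivative of `Ffun`. -/
noncomputable def Ffun' (Q s2 m4 : ℂ) (z : ℂ) : ℂ :=
  Q * (2*(1 - Complex.cos z) - z^2 * Complex.cos z)
  + s2 * ((4*z^3 + 2*z) * Complex.sin z + (z^4 + z^2) * Complex.cos z)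
  + s2 * (3*z^2*(Complex.cos z - 2) - z^3 * Complex.sin z)
  + m4 * (3*z^2*(1 - Complex.cos z) + z^3 * Complex.sin z)

lemma hasDerivAt_Ffun (Q s2 m4 z : ℂ) :
    HasDerivAt (Ffun Q s2 m4) (Ffun' Q s2 m4 z) z := by
  have hs := Complex.hasDerivAt_sin z
  have hc := Complex.hasDerivAt_cos z
  have h1 : HasDerivAt (fun z : ℂ => Q * z * (2*(1 - Complex.cos z) - z * Complex.sin z))
      (Q * (2*(1 - Complex.cos z) - z^2 * Complex.cos z)) z := by
    have ha : HasDerivAt (fun z : ℂ => Q * z) Q z := by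
      simpa using (hasDerivAt_id z).const_mul Q
    have hb : HasDerivAt (fun z : ℂ => 2*(1 - Complex.cos z) - z * Complex.sin z)
        (2 * Complex.sin z - (Complex.sin z + z * Complex.cos z)) z := by
      have hb1 : HasDerivAt (fun z : ℂ => 2*(1 - Complex.cos z)) (2 * Complex.sin z) z := by
        simpa using (hc.const_sub 1).const_mul (2:ℂ)
      have hb2 : HasDerivAt (fun z : ℂ => z * Complex.sin z)
          (Complex.sin z + z * Complex.cos z) z := by
        simpa using (hasDerivAt_id z).fun_mul hs
      exact hb1.sub hb2
    have := ha.mul hb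
    refine this.congr_deriv ?_
    try ring
  have h2 : HasDerivAt (fun z : ℂ => s2 * ((z^4 + z^2) * Complex.sin z))
      (s2 * ((4*z^3 + 2*z) * Complex.sin z + (z^4 + z^2) * Complex.cos z)) z := by
    have ha : HasDerivAt (fun z : ℂ => z^4 + z^2) (4*z^3 + 2*z) z := by
      simpa using (hasDerivAt_pow 4 z).fun_add (hasDerivAt_pow 2 z)
    exact (ha.mul hs).const_mul s2
  have h3 : HasDerivAt (fun z : ℂ => s2 * z^3 * (Complex.cos z - 2))
      (s2 * (3*z^2*(Complex.cos z - 2) - z^3 * Complex.sin z)) z := by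
    have ha : HasDerivAt (fun z : ℂ => s2 * z^3) (s2 * (3*z^2)) z := by
      simpa using (hasDerivAt_pow 3 z).const_mul s2
    have hb : HasDerivAt (fun z : ℂ => Complex.cos z - 2) (-Complex.sin z) z := hc.sub_const 2
    have := ha.mul hb
    refine this.congr_deriv ?_
    try ring
  have h4 : HasDerivAt (fun z : ℂ => m4 * (z^3 * (1 - Complex.cos z)))
      (m4 * (3*z^2*(1 - Complex.cos z) + z^3 * Complex.sin z)) z := by
    have ha : HasDerivAt (fun z : ℂ => z^3) (3*z^2) z := by simpa using hasDerivAt_pow 3 z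
    have hb : HasDerivAt (fun z : ℂ => 1 - Complex.cos z) (Complex.sin z) z := by
      simpa using hc.const_sub 1
    have := (ha.mul hb).const_mul m4
    refine this.congr_deriv ?_
    try ring
  have := ((h1.fun_add h2).fun_add h3).fun_add h4
  exact this

lemma norm_exp_sub_one' (w : ℂ) (hw : ‖w‖ ≤ 1) :
    ‖Complex.exp (w * Complex.I) - 1‖ ≤ 2 * ‖w‖ ∧
    ‖Complex.exp (-(w * Complex.I)) - 1‖ ≤ 2 * ‖w‖ := by
  have e1 : ‖w * Complex.I‖ = ‖w‖ := by
    simp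
  have e2 : ‖-(w * Complex.I)‖ = ‖w‖ := by
    rw [norm_neg]; exact e1
  constructor
  · have := Complex.norm_exp_sub_one_le (x := w * Complex.I) (by rw [e1]; exact hw)
    rw [e1] at this; simpa using this
  · have := Complex.norm_exp_sub_one_le (x := -(w * Complex.I)) (by rw [e2]; exact hw)
    rw [e2] at this; simpa using this

lemma norm_sin_le_two (w : ℂ) (hw : ‖w‖ ≤ 1) : ‖Complex.sin w‖ ≤ 2 * ‖w‖ := by
  obtain ⟨h2, h1⟩ := norm_exp_sub_one' w hw
  rw [Complex.sin]
  calc ‖(Complex.exp (-w * Complex.I) - Complex.exp (w * Complex.I)) * Complex.I / 2‖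
      = ‖(Complex.exp (-(w * Complex.I)) - 1) - (Complex.exp (w * Complex.I) - 1)‖ / 2 := by
        rw [norm_div, norm_mul, Complex.norm_I, mul_one, neg_mul]
        norm_num
    _ ≤ (‖Complex.exp (-(w * Complex.I)) - 1‖ + ‖Complex.exp (w * Complex.I) - 1‖) / 2 := by
        gcongr; exact norm_sub_le _ _
    _ ≤ (2 * ‖w‖ + 2 * ‖w‖) / 2 := by gcongr
    _ = 2 * ‖w‖ := by ring

lemma norm_cos_sub_one_le_two (w : ℂ) (hw : ‖w‖ ≤ 1) : ‖Complex.cos w - 1‖ ≤ 2 * ‖w‖ := by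
  obtain ⟨h2, h1⟩ := norm_exp_sub_one' w hw
  rw [Complex.cos]
  calc ‖(Complex.exp (w * Complex.I) + Complex.exp (-w * Complex.I)) / 2 - 1‖
      = ‖((Complex.exp (w * Complex.I) - 1) + (Complex.exp (-(w * Complex.I)) - 1))‖ / 2 := by
        have e : (Complex.exp (w * Complex.I) + Complex.exp (-w * Complex.I)) / 2 - 1
            = ((Complex.exp (w * Complex.I) - 1) + (Complex.exp (-(w * Complex.I)) - 1)) / 2 := by
          ring_nf
        rw [e, norm_div]
        norm_num
    _ ≤ (‖Complex.exp (w * Complex.I) - 1‖ + ‖Complex.exp (-(w * Complex.I)) - 1‖) / 2 := by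
        gcongr; exact norm_add_le _ _
    _ ≤ (2 * ‖w‖ + 2 * ‖w‖) / 2 := by gcongr
    _ = 2 * ‖w‖ := by ring

open Metric in
lemma newton_unique_zero {f f' : ℂ → ℂ} {A t : ℂ} {r : ℝ} (hr : 0 < r) (hA : A ≠ 0)
    (hder : ∀ z ∈ closedBall t r, HasDerivAt f (f' z) z)
    (hd : ∀ z ∈ closedBall t r, ‖f' z - A‖ ≤ ‖A‖ / 2)
    (h0 : ‖f t‖ < ‖A‖ * r / 2) :
    ∃! z : ℂ, ‖z - t‖ < r ∧ f z = 0 := by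
  have hA' : (0:ℝ) < ‖A‖ := norm_pos_iff.mpr hA
  set T : ℂ → ℂ := fun z => z - f z / A with hT
  have hTder : ∀ z ∈ closedBall t r,
      HasDerivWithinAt T (1 - f' z / A) (closedBall t r) z := fun z hz =>
    (((hasDerivAt_id z).sub ((hder z hz).div_const A)).hasDerivWithinAt)
  have hbound : ∀ z ∈ closedBall t r, ‖1 - f' z / A‖ ≤ 1/2 := by
    intro z hz
    have h1 : 1 - f' z / A = -((f' z - A) / A) := by rw [sub_div, div_self hA]; ring
    rw [h1, norm_neg, norm_div, div_le_iff₀ hA']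
    linarith [hd z hz]
  have hlip : ∀ z₁ ∈ closedBall t r, ∀ z₂ ∈ closedBall t r,
      ‖T z₁ - T z₂‖ ≤ (1/2) * ‖z₁ - z₂‖ := fun z₁ h₁ z₂ h₂ =>
    (convex_closedBall t r).norm_image_sub_le_of_norm_hasDerivWithin_le hTder hbound h₂ h₁
  have htmem : t ∈ closedBall t r := mem_closedBall_self hr.le
  have hTt : ‖T t - t‖ < r/2 := by
    have : T t - t = -(f t / A) := by simp [hT]
    rw [this, norm_neg, norm_div, div_lt_iff₀ hA']
    linarith
  have hmaps : ∀ z ∈ closedBall t r, ‖T z - t‖ < r := by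
    intro z hz
    have hzt : ‖z - t‖ ≤ r := by rwa [mem_closedBall, dist_eq_norm] at hz
    calc ‖T z - t‖ = ‖(T z - T t) + (T t - t)‖ := by ring_nf
      _ ≤ ‖T z - T t‖ + ‖T t - t‖ := norm_add_le _ _
      _ ≤ (1/2) * ‖z - t‖ + ‖T t - t‖ := by gcongr; exact hlip z hz t htmem
      _ < (1/2) * r + r/2 := by
          have h2 : (1/2) * ‖z - t‖ ≤ (1/2) * r := by linarith
          linarith [hTt]
      _ = r := by ring
  set s := closedBall t r
  haveI : Nonempty s := ⟨⟨t, htmem⟩⟩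
  haveI : CompleteSpace s := (isClosed_closedBall (x := t) (ε := r)).completeSpace_coe
  set T' : s → s := fun z =>
    ⟨T z, mem_closedBall.mpr (by rw [dist_eq_norm]; exact (hmaps z z.2).le)⟩ with hT'
  have hcon : ContractingWith (1/2 : NNReal) T' := by
    constructor
    · rw [← NNReal.coe_lt_coe]; push_cast; norm_num
    · apply LipschitzWith.of_dist_le_mul
      intro z₁ z₂
      rw [Subtype.dist_eq, Subtype.dist_eq, dist_eq_norm, dist_eq_norm]
      have := hlip z₁ z₁.2 z₂ z₂.2
      simpa using this
  set z₀ := hcon.fixedPoint T' with hz₀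
  have hfix : T' z₀ = z₀ := hcon.fixedPoint_isFixedPt
  have hfixv : T (z₀ : ℂ) = (z₀ : ℂ) := congrArg Subtype.val hfix
  have hfz₀ : f (z₀ : ℂ) = 0 := by
    have : f (z₀ : ℂ) / A = 0 := by
      have := hfixv
      simp only [hT] at this
      linear_combination (z₀ : ℂ) - this
    exact (div_eq_zero_iff.mp this).resolve_right hA
  have hz₀lt : ‖(z₀ : ℂ) - t‖ < r := by
    rw [← hfixv]; exact hmaps _ z₀.2
  refine ⟨(z₀ : ℂ), ⟨hz₀lt, hfz₀⟩, ?_⟩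
  intro z' hz'
  have h1 : z' ∈ closedBall t r := by
    rw [mem_closedBall, dist_eq_norm]; exact hz'.1.le
  have hTz' : T z' = z' := by simp [hT, hz'.2]
  have h2 := hlip z' h1 (z₀ : ℂ) z₀.2
  rw [hTz', hfixv] at h2
  have h3 : ‖z' - (z₀ : ℂ)‖ = 0 := by linarith [norm_nonneg (z' - (z₀ : ℂ))]
  have h4 := norm_eq_zero.mp h3
  linear_combination h4

set_option maxHeartbeats 1000000 in
/-- For `Y` spanned by `(1,α)`, with `(x,y) = (1,α)/√(1+|α|²)` and `K` hermitian, there are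
`C > 0` and `N` such that for every `k ≥ N` the function `D_{Y,K}` has exactly one zero in the
open disc of radius `C/k` around `kπ`. -/
theorem stmt19 (α : ℂ) (K : Matrix (Fin 2) (Fin 2) ℂ) (hK : K.IsHermitian)
    (x y : ℂ)
    (hx : x = (1 : ℂ) / ((Real.sqrt (1 + ‖α‖ ^ 2) : ℝ) : ℂ))
    (hy : y = α / ((Real.sqrt (1 + ‖α‖ ^ 2) : ℝ) : ℂ)) :
    ∃ C : ℝ, 0 < C ∧ ∃ N : ℕ, ∀ k : ℕ, N ≤ k →
      ∃! z : ℂ, ‖z - (((k:ℝ) * Real.pi : ℝ) : ℂ)‖ < C / (k:ℝ) ∧ DYK K x y z = 0 := by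
  set q : ℝ := Real.sqrt (1 + ‖α‖ ^ 2) with hqdef
  have hq0 : 0 < q := Real.sqrt_pos.mpr (by positivity)
  have hq1 : 1 ≤ q := by
    have h1 : Real.sqrt 1 ≤ q := Real.sqrt_le_sqrt (by linarith only [sq_nonneg (‖α‖)])
    simpa [Real.sqrt_one] using h1
  set u := (starRingEnd ℂ) x with hudef
  set v := (starRingEnd ℂ) y with hvdef
  have hu : u = ((q:ℝ):ℂ)⁻¹ := by
    rw [hudef, hx, one_div, map_inv₀, Complex.conj_ofReal]
  set σ : ℝ := (q^2)⁻¹ with hσdef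
  have hσpos : 0 < σ := by positivity
  have hu2 : u^2 = ((σ:ℝ):ℂ) := by
    rw [hu, hσdef]; push_cast; ring
  have hu2n : ‖u^2‖ = σ := by rw [hu2, Complex.norm_real, Real.norm_eq_abs, abs_of_pos hσpos]
  set Q : ℂ := K 0 0 * u^2 + (K 0 1 + K 1 0) * u * v + K 1 1 * v^2 with hQdef
  set m4 : ℂ := 2*(v^2 - u*v) with hm4def
  set c₁ : ℝ := ‖Q‖ with hc₁def
  set c₂ : ℝ := ‖m4‖ with hc₂def
  have hc₁0 : 0 ≤ c₁ := norm_nonneg Q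
  have hc₂0 : 0 ≤ c₂ := norm_nonneg m4
  set K₁ : ℝ := 4*c₁ + 3*σ + 2*c₂ + 1 with hK₁def
  have hK₁pos : 0 < K₁ := by positivity
  have hπ3 : (3:ℝ) ≤ Real.pi := by linarith [Real.pi_gt_three]
  have hπpos : 0 < Real.pi := by linarith
  set C : ℝ := 2*K₁/(σ*Real.pi) with hCdef
  have hCpos : 0 < C := by positivity
  set D₂ : ℝ := 11*c₁ + 14*c₂ + 36*σ + 10*σ*C with hD₂def
  have hD₂0 : 0 ≤ D₂ := by positivity
  obtain ⟨N, hN⟩ := exists_nat_ge (max C (16*D₂/(σ*Real.pi)) + 1)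
  refine ⟨C, hCpos, N, ?_⟩
  intro k hk
  have hkR : (max C (16*D₂/(σ*Real.pi)) + 1) ≤ (k:ℝ) :=
    le_trans hN (by exact_mod_cast hk)
  have hmax1 := le_max_left C (16*D₂/(σ*Real.pi))
  have hmax2 := le_max_right C (16*D₂/(σ*Real.pi))
  have hk1 : (1:ℝ) ≤ (k:ℝ) := by linarith only [hkR, hmax1, hCpos]
  have hk0 : (0:ℝ) < (k:ℝ) := by linarith
  have hkC : C ≤ (k:ℝ) := by linarith
  have hkD : 16*D₂/(σ*Real.pi) ≤ (k:ℝ) := by linarith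
  set t : ℝ := (k:ℝ) * Real.pi with htdef
  have ht3 : 3 ≤ t := by
    have h' : Real.pi ≤ (k:ℝ)*Real.pi := le_mul_of_one_le_left hπpos.le hk1
    rw [htdef]; linarith only [h', hπ3]
  have ht0 : 0 < t := by linarith
  have ht1 : 1 ≤ t := by linarith
  set tc : ℂ := ((t:ℝ):ℂ) with htcdef
  have htcn : ‖tc‖ = t := by rw [htcdef, Complex.norm_real, Real.norm_eq_abs, abs_of_pos ht0]
  set r : ℝ := C / (k:ℝ) with hrdef
  have hrpos : 0 < r := div_pos hCpos hk0
  have hr1 : r ≤ 1 := by rw [hrdef, div_le_one hk0]; exact hkC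
  set ε : ℂ := (-1:ℂ)^k with hεdef
  have hεn : ‖ε‖ = 1 := by rw [hεdef]; simp
  set A : ℂ := ε * u^2 * tc^4 with hAdef
  have hu2ne : u^2 ≠ 0 := by
    rw [hu2]; exact Complex.ofReal_ne_zero.mpr (ne_of_gt hσpos)
  have htcne : tc ≠ 0 := by
    rw [htcdef]; exact Complex.ofReal_ne_zero.mpr (ne_of_gt ht0)
  have hεne : ε ≠ 0 := by rw [hεdef]; exact pow_ne_zero _ (by norm_num)
  have hAne : A ≠ 0 := by
    rw [hAdef]; exact mul_ne_zero (mul_ne_zero hεne hu2ne) (pow_ne_zero _ htcne)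
  have hAn : ‖A‖ = σ * t^4 := by
    rw [hAdef, norm_mul, norm_mul, hεn, one_mul, hu2n, norm_pow, htcn]
  have hsin_t : Complex.sin tc = 0 := by
    rw [htcdef, ← Complex.ofReal_sin, htdef, Real.sin_nat_mul_pi]
    simp
  have hcos_t : Complex.cos tc = ε := by
    rw [htcdef, ← Complex.ofReal_cos, htdef]
    have h1 : Real.cos ((k:ℝ) * Real.pi) = (-1)^k := by
      simpa using Real.cos_add_nat_mul_pi 0 k
    rw [h1, hεdef]; push_cast; ring
  set t1 : ℝ := t + 1 with ht1def
  have ht1ge : 1 ≤ t1 := by linarith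
  have ht1pos : 0 < t1 := by linarith
  clear_value q u v σ Q m4 c₁ c₂ K₁ C D₂ t tc r ε A t1
  have hπ4 : Real.pi ≤ 4 := Real.pi_le_four
  have hrt1 : r * t1 ≤ 5*C := by
    rw [hrdef, ht1def, htdef, div_mul_eq_mul_div, div_le_iff₀ hk0]
    have h5k : (k:ℝ)*Real.pi + 1 ≤ 5*(k:ℝ) := by
      have h' := mul_le_mul_of_nonneg_left hπ4 (le_of_lt hk0)
      linarith only [h', hk1]
    have h'' := mul_le_mul_of_nonneg_left h5k hCpos.le
    linarith only [h'']
  have e1 : t1^2 ≤ t1^3 := by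
    have h' := mul_le_mul_of_nonneg_left ht1ge (sq_nonneg t1)
    have ha : t1^2*t1 = t1^3 := by ring
    have hb : t1^2*1 = t1^2 := by ring
    linarith only [h', ha, hb]
  have e6 : 1 ≤ t1^3 := by
    have h' := pow_le_pow_left₀ (by norm_num : (0:ℝ) ≤ 1) ht1ge 3
    have ha : (1:ℝ)^3 = 1 := by norm_num
    linarith only [h', ha]
  have e2 : t1 ≤ t1^3 := by
    have h' := mul_le_mul_of_nonneg_left e1 ht1pos.le
    have h'' := mul_le_mul_of_nonneg_left ht1ge ht1pos.le
    have ha : t1*t1^2 = t1^3 := by ring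
    have hb : t1*1 = t1 := by ring
    have hc : t1*t1 = t1^2 := by ring
    linarith only [h'', ha, hb, hc, e1]
  have e3 : r*t1^3 ≤ t1^3 := by
    have h' := mul_le_mul_of_nonneg_right hr1 (by positivity : (0:ℝ) ≤ t1^3)
    linarith only [h']
  have e4 : r*t1 ≤ t1^3 := by
    have h' := mul_le_mul_of_nonneg_right hr1 ht1pos.le
    linarith only [h', e2]
  have e5 : r * t1^4 ≤ 5*C*t1^3 := by
    have h' := mul_le_mul_of_nonneg_right hrt1 (by positivity : (0:ℝ) ≤ t1^3)
    have ha : r*t1*t1^3 = r*t1^4 := by ring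
    have hb : 5*C*t1^3 = 5*C*t1^3 := rfl
    linarith only [h', ha]
  -- derivative bound on the closed ball
  have hd : ∀ z ∈ Metric.closedBall tc r, ‖Ffun' Q (u^2) m4 z - A‖ ≤ ‖A‖/2 := by
    intro z hz
    have hwr : ‖z - tc‖ ≤ r := by rwa [Metric.mem_closedBall, dist_eq_norm] at hz
    have hw1 : ‖z - tc‖ ≤ 1 := le_trans hwr hr1
    have hzn : ‖z‖ ≤ t1 := by
      have h' : z = tc + (z - tc) := by ring
      calc ‖z‖ = ‖tc + (z - tc)‖ := by rw [← h']
        _ ≤ ‖tc‖ + ‖z - tc‖ := norm_add_le _ _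
        _ ≤ t + 1 := by rw [htcn]; linarith
        _ = t1 := ht1def.symm
    have hadd : tc + (z - tc) = z := by ring
    have hsz : Complex.sin z = ε * Complex.sin (z - tc) := by
      have h' := Complex.sin_add tc (z - tc)
      rw [hadd, hsin_t, hcos_t, zero_mul, zero_add] at h'
      exact h'
    have hcz : Complex.cos z = ε * Complex.cos (z - tc) := by
      have h' := Complex.cos_add tc (z - tc)
      rw [hadd, hsin_t, hcos_t, zero_mul, sub_zero] at h'
      exact h'
    have hs2 : ‖Complex.sin z‖ ≤ 2*r := by
      rw [hsz, norm_mul, hεn, one_mul]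
      calc ‖Complex.sin (z - tc)‖ ≤ 2 * ‖z - tc‖ := norm_sin_le_two _ hw1
        _ ≤ 2*r := by linarith
    have hcε : ‖Complex.cos z - ε‖ ≤ 2*r := by
      have h' : Complex.cos z - ε = ε * (Complex.cos (z - tc) - 1) := by rw [hcz]; ring
      rw [h', norm_mul, hεn, one_mul]
      calc ‖Complex.cos (z - tc) - 1‖ ≤ 2 * ‖z - tc‖ := norm_cos_sub_one_le_two _ hw1
        _ ≤ 2*r := by linarith
    have hc3 : ‖Complex.cos z‖ ≤ 3 := by
      have h' : Complex.cos z = (Complex.cos z - ε) + ε := by ring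
      calc ‖Complex.cos z‖ = ‖(Complex.cos z - ε) + ε‖ := by rw [← h']
        _ ≤ ‖Complex.cos z - ε‖ + ‖ε‖ := norm_add_le _ _
        _ ≤ 2*r + 1 := by rw [hεn]; linarith
        _ ≤ 3 := by linarith
    have h1c : ‖1 - Complex.cos z‖ ≤ 4 := by
      calc ‖1 - Complex.cos z‖ ≤ ‖(1:ℂ)‖ + ‖Complex.cos z‖ := norm_sub_le _ _
        _ ≤ 1 + 3 := by rw [norm_one]; linarith
        _ = 4 := by norm_num
    have hcm2 : ‖Complex.cos z - 2‖ ≤ 5 := by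
      calc ‖Complex.cos z - 2‖ ≤ ‖Complex.cos z‖ + ‖(2:ℂ)‖ := norm_sub_le _ _
        _ ≤ 3 + 2 := by
            have : ‖(2:ℂ)‖ = 2 := by norm_num
            rw [this]; linarith
        _ = 5 := by norm_num
    have hsplit : Ffun' Q (u^2) m4 z - A =
        Q * (2*(1 - Complex.cos z) - z^2 * Complex.cos z)
      + u^2 * ((4*z^3 + 2*z) * Complex.sin z + z^2 * Complex.cos z)
      + u^2 * (3*z^2*(Complex.cos z - 2) - z^3 * Complex.sin z)
      + m4 * (3*z^2*(1 - Complex.cos z) + z^3 * Complex.sin z)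
      + u^2 * (z^4 * (Complex.cos z - ε))
      + u^2 * ε * (z^4 - tc^4) := by
      simp only [Ffun']; rw [hAdef]; ring
    have n1 : ‖Q * (2*(1 - Complex.cos z) - z^2 * Complex.cos z)‖ ≤ c₁ * (11 * t1^3) := by
      rw [norm_mul, ← hc₁def]
      have hin : ‖2*(1 - Complex.cos z) - z^2 * Complex.cos z‖ ≤ 11 * t1^3 := by
        calc ‖2*(1 - Complex.cos z) - z^2 * Complex.cos z‖
            ≤ ‖2*(1 - Complex.cos z)‖ + ‖z^2 * Complex.cos z‖ := norm_sub_le _ _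
          _ = 2 * ‖1 - Complex.cos z‖ + ‖z‖^2 * ‖Complex.cos z‖ := by
              rw [norm_mul, norm_mul, norm_pow]; norm_num
          _ ≤ 2 * 4 + t1^2 * 3 := by gcongr
          _ ≤ 11 * t1^3 := by linarith only [e1, e6]
      exact mul_le_mul_of_nonneg_left hin hc₁0
    have n2 : ‖u^2 * ((4*z^3 + 2*z) * Complex.sin z + z^2 * Complex.cos z)‖
        ≤ σ * (15 * t1^3) := by
      rw [norm_mul, hu2n]
      have hin : ‖(4*z^3 + 2*z) * Complex.sin z + z^2 * Complex.cos z‖ ≤ 15 * t1^3 := by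
        calc ‖(4*z^3 + 2*z) * Complex.sin z + z^2 * Complex.cos z‖
            ≤ ‖4*z^3 + 2*z‖ * ‖Complex.sin z‖ + ‖z‖^2 * ‖Complex.cos z‖ := by
              rw [← norm_mul, ← norm_pow, ← norm_mul]; exact norm_add_le _ _
          _ ≤ (4*t1^3 + 2*t1) * (2*r) + t1^2 * 3 := by
              gcongr
              calc ‖4*z^3 + 2*z‖ ≤ ‖4*z^3‖ + ‖2*z‖ := norm_add_le _ _
                _ = 4*‖z‖^3 + 2*‖z‖ := by
                    rw [norm_mul, norm_mul, norm_pow]; norm_num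
                _ ≤ 4*t1^3 + 2*t1 := by gcongr
          _ ≤ 15 * t1^3 := by
              have ha : (4*t1^3 + 2*t1) * (2*r) + t1^2*3
                  = 8*(r*t1^3) + 4*(r*t1) + 3*t1^2 := by ring
              linarith only [ha, e1, e3, e4]
      exact mul_le_mul_of_nonneg_left hin hσpos.le
    have n3 : ‖u^2 * (3*z^2*(Complex.cos z - 2) - z^3 * Complex.sin z)‖
        ≤ σ * (17 * t1^3) := by
      rw [norm_mul, hu2n]
      have hin : ‖3*z^2*(Complex.cos z - 2) - z^3 * Complex.sin z‖ ≤ 17 * t1^3 := by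
        calc ‖3*z^2*(Complex.cos z - 2) - z^3 * Complex.sin z‖
            ≤ ‖3*z^2*(Complex.cos z - 2)‖ + ‖z^3 * Complex.sin z‖ := norm_sub_le _ _
          _ = 3*‖z‖^2*‖Complex.cos z - 2‖ + ‖z‖^3*‖Complex.sin z‖ := by
              rw [norm_mul, norm_mul, norm_mul, norm_pow, norm_pow]; norm_num
          _ ≤ 3*t1^2*5 + t1^3*(2*r) := by gcongr
          _ ≤ 17 * t1^3 := by
              have ha : 3*t1^2*5 + t1^3*(2*r) = 15*t1^2 + 2*(r*t1^3) := by ring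
              linarith only [ha, e1, e3]
      exact mul_le_mul_of_nonneg_left hin hσpos.le
    have n4 : ‖m4 * (3*z^2*(1 - Complex.cos z) + z^3 * Complex.sin z)‖
        ≤ c₂ * (14 * t1^3) := by
      rw [norm_mul, ← hc₂def]
      have hin : ‖3*z^2*(1 - Complex.cos z) + z^3 * Complex.sin z‖ ≤ 14 * t1^3 := by
        calc ‖3*z^2*(1 - Complex.cos z) + z^3 * Complex.sin z‖
            ≤ ‖3*z^2*(1 - Complex.cos z)‖ + ‖z^3 * Complex.sin z‖ := norm_add_le _ _
          _ = 3*‖z‖^2*‖1 - Complex.cos z‖ + ‖z‖^3*‖Complex.sin z‖ := by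
              rw [norm_mul, norm_mul, norm_mul, norm_pow, norm_pow]; norm_num
          _ ≤ 3*t1^2*4 + t1^3*(2*r) := by gcongr
          _ ≤ 14 * t1^3 := by
              have ha : 3*t1^2*4 + t1^3*(2*r) = 12*t1^2 + 2*(r*t1^3) := by ring
              linarith only [ha, e1, e3]
      exact mul_le_mul_of_nonneg_left hin hc₂0
    have n5 : ‖u^2 * (z^4 * (Complex.cos z - ε))‖ ≤ σ * (10*C * t1^3) := by
      rw [norm_mul, hu2n]
      have hin : ‖z^4 * (Complex.cos z - ε)‖ ≤ 10*C * t1^3 := by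
        calc ‖z^4 * (Complex.cos z - ε)‖ = ‖z‖^4 * ‖Complex.cos z - ε‖ := by
              rw [norm_mul, norm_pow]
          _ ≤ t1^4 * (2*r) := by gcongr
          _ ≤ 10*C * t1^3 := by
              have ha : t1^4*(2*r) = 2*(r*t1^4) := by ring
              linarith only [ha, e5]
      exact mul_le_mul_of_nonneg_left hin hσpos.le
    have n6 : ‖u^2 * ε * (z^4 - tc^4)‖ ≤ σ * (4 * t1^3) := by
      rw [norm_mul, norm_mul, hu2n, hεn, mul_one]
      have hfz : z^4 - tc^4 = (z - tc)*(z^3 + z^2*tc + z*tc^2 + tc^3) := by ring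
      have hin : ‖z^4 - tc^4‖ ≤ 4 * t1^3 := by
        rw [hfz, norm_mul]
        have htct1 : ‖tc‖ ≤ t1 := by rw [htcn]; linarith
        have hsum : ‖z^3 + z^2*tc + z*tc^2 + tc^3‖ ≤ 4*t1^3 := by
          calc ‖z^3 + z^2*tc + z*tc^2 + tc^3‖
              ≤ ‖z^3 + z^2*tc + z*tc^2‖ + ‖tc^3‖ := norm_add_le _ _
            _ ≤ (‖z^3 + z^2*tc‖ + ‖z*tc^2‖) + ‖tc^3‖ := by
                gcongr; exact norm_add_le _ _
            _ ≤ ((‖z^3‖ + ‖z^2*tc‖) + ‖z*tc^2‖) + ‖tc^3‖ := by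
                gcongr; exact norm_add_le _ _
            _ = ‖z‖^3 + ‖z‖^2*‖tc‖ + ‖z‖*‖tc‖^2 + ‖tc‖^3 := by
                rw [norm_mul, norm_mul, norm_pow, norm_pow, norm_pow, norm_pow]
            _ ≤ t1^3 + t1^2*t1 + t1*t1^2 + t1^3 := by gcongr
            _ = 4*t1^3 := by ring
        calc ‖z - tc‖ * ‖z^3 + z^2*tc + z*tc^2 + tc^3‖ ≤ r * (4*t1^3) := by
              gcongr
          _ ≤ 4 * t1^3 := by
              have ha : r*(4*t1^3) = 4*(r*t1^3) := by ring
              linarith only [ha, e3]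
      exact mul_le_mul_of_nonneg_left hin hσpos.le
    have hsum6 : ‖Ffun' Q (u^2) m4 z - A‖
        ≤ c₁ * (11 * t1^3) + σ * (15 * t1^3) + σ * (17 * t1^3) + c₂ * (14 * t1^3)
          + σ * (10*C * t1^3) + σ * (4 * t1^3) := by
      rw [hsplit]
      calc ‖_ + _ + _ + _ + _ + _‖
          ≤ ‖_ + _ + _ + _ + _‖ + ‖_‖ := norm_add_le _ _
        _ ≤ (‖_ + _ + _ + _‖ + ‖_‖) + ‖_‖ := by gcongr; exact norm_add_le _ _
        _ ≤ ((‖_ + _ + _‖ + ‖_‖) + ‖_‖) + ‖_‖ := by gcongr; exact norm_add_le _ _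
        _ ≤ (((‖_ + _‖ + ‖_‖) + ‖_‖) + ‖_‖) + ‖_‖ := by gcongr; exact norm_add_le _ _
        _ ≤ ((((‖_‖ + ‖_‖) + ‖_‖) + ‖_‖) + ‖_‖) + ‖_‖ := by gcongr; exact norm_add_le _ _
        _ ≤ c₁ * (11 * t1^3) + σ * (15 * t1^3) + σ * (17 * t1^3) + c₂ * (14 * t1^3)
            + σ * (10*C * t1^3) + σ * (4 * t1^3) := by
            gcongr <;> first
              | exact n1 | exact n2 | exact n3 | exact n4 | exact n5 | exact n6
    have hfin : c₁ * (11 * t1^3) + σ * (15 * t1^3) + σ * (17 * t1^3) + c₂ * (14 * t1^3)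
        + σ * (10*C * t1^3) + σ * (4 * t1^3) ≤ ‖A‖/2 := by
      rw [hAn]
      have h16 : 16*D₂ ≤ σ*t := by
        have h' := hkD
        rw [div_le_iff₀ (by positivity : (0:ℝ) < σ*Real.pi)] at h'
        rw [htdef]
        have ha : (k:ℝ)*(σ*Real.pi) = σ*((k:ℝ)*Real.pi) := by ring
        linarith only [h', ha]
      have h8 : t1^3 ≤ 8*t^3 := by
        rw [ht1def]
        have h2t : t + 1 ≤ 2*t := by linarith only [ht1]
        have h' := pow_le_pow_left₀ (by linarith only [ht0] : (0:ℝ) ≤ t + 1) h2t 3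
        have ha : (2*t)^3 = 8*t^3 := by ring
        linarith only [h', ha]
      have hle : D₂ * t1^3 ≤ σ * t^4 / 2 := by
        have hA1 := mul_le_mul_of_nonneg_right h16 (by positivity : (0:ℝ) ≤ t^3)
        have hA2 := mul_le_mul_of_nonneg_left h8 hD₂0
        have ha : σ*t*t^3 = σ*t^4 := by ring
        have hb : 16*D₂*t^3 = 16*(D₂*t^3) := by ring
        have hc : D₂*(8*t^3) = 8*(D₂*t^3) := by ring
        linarith only [hA1, hA2, ha, hb, hc]
      calc c₁ * (11 * t1^3) + σ * (15 * t1^3) + σ * (17 * t1^3) + c₂ * (14 * t1^3)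
            + σ * (10*C * t1^3) + σ * (4 * t1^3) = D₂ * t1^3 := by rw [hD₂def]; ring
        _ ≤ σ * t^4 / 2 := hle
    exact le_trans hsum6 hfin
  -- size of F at the center
  have hσne : σ ≠ 0 := ne_of_gt hσpos
  have hπne : Real.pi ≠ 0 := ne_of_gt hπpos
  have hkne : (k:ℝ) ≠ 0 := ne_of_gt hk0
  have hft : ‖Ffun Q (u^2) m4 tc‖ < ‖A‖ * r / 2 := by
    have hval : Ffun Q (u^2) m4 tc =
        Q * tc * (2*(1 - ε)) + u^2 * tc^3 * (ε - 2) + m4 * (tc^3 * (1 - ε)) := by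
      simp only [Ffun]; rw [hsin_t, hcos_t]; ring
    have h1ε : ‖(1:ℂ) - ε‖ ≤ 2 := by
      calc ‖(1:ℂ) - ε‖ ≤ ‖(1:ℂ)‖ + ‖ε‖ := norm_sub_le _ _
        _ = 2 := by rw [norm_one, hεn]; norm_num
    have hε2 : ‖ε - 2‖ ≤ 3 := by
      calc ‖ε - (2:ℂ)‖ ≤ ‖ε‖ + ‖(2:ℂ)‖ := norm_sub_le _ _
        _ ≤ 3 := by
            have : ‖(2:ℂ)‖ = 2 := by norm_num
            rw [hεn, this]; norm_num
    have hb : ‖Ffun Q (u^2) m4 tc‖ ≤ 4*c₁*t + 3*σ*t^3 + 2*c₂*t^3 := by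
      rw [hval]
      have hb1 : ‖Q * tc * (2*(1 - ε))‖ ≤ c₁ * t * 4 := by
        rw [norm_mul, norm_mul, htcn, ← hc₁def]
        have h2' : ‖(2:ℂ)*(1-ε)‖ ≤ 4 := by
          rw [norm_mul]
          have h2n : ‖(2:ℂ)‖ = 2 := by norm_num
          rw [h2n]; linarith
        gcongr
      have hb2 : ‖u^2 * tc^3 * (ε - 2)‖ ≤ σ * t^3 * 3 := by
        rw [norm_mul, norm_mul, hu2n, norm_pow, htcn]
        gcongr
      have hb3 : ‖m4 * (tc^3 * (1 - ε))‖ ≤ c₂ * (t^3 * 2) := by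
        rw [norm_mul, norm_mul, norm_pow, htcn, ← hc₂def]
        gcongr
      calc ‖Q * tc * (2*(1 - ε)) + u^2 * tc^3 * (ε - 2) + m4 * (tc^3 * (1 - ε))‖
          ≤ ‖Q * tc * (2*(1 - ε))‖ + ‖u^2 * tc^3 * (ε - 2)‖ + ‖m4 * (tc^3 * (1 - ε))‖ :=
            norm_add₃_le
        _ ≤ c₁ * t * 4 + σ * t^3 * 3 + c₂ * (t^3 * 2) :=
            add_le_add (add_le_add hb1 hb2) hb3
        _ = 4*c₁*t + 3*σ*t^3 + 2*c₂*t^3 := by ring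
    have hrhs : ‖A‖ * r / 2 = K₁ * t^3 := by
      rw [hAn, hrdef, hCdef, htdef]
      field_simp
    rw [hrhs]
    have hstrict : 4*c₁*t + 3*σ*t^3 + 2*c₂*t^3 < K₁ * t^3 := by
      rw [hK₁def]
      have ht13 : t ≤ t^3 := by
        have h' := pow_le_pow_left₀ ht0.le (le_refl t) 1
        have h'' : t^2*t ≥ 1*t := mul_le_mul_of_nonneg_right (by
          have := pow_le_pow_left₀ (by norm_num : (0:ℝ) ≤ 1) ht1 2
          simpa using this) ht0.le
        have ha : t^2*t = t^3 := by ring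
        linarith only [h'', ha]
      have hB := mul_le_mul_of_nonneg_left ht13 (by positivity : (0:ℝ) ≤ 4*c₁)
      have hC' := pow_pos ht0 3
      have ha : (4*c₁+3*σ+2*c₂+1)*t^3 = 4*c₁*t^3 + 3*σ*t^3 + 2*c₂*t^3 + t^3 := by ring
      have hb : 4*c₁*t = 4*c₁*t := rfl
      linarith only [hB, hC', ha]
    linarith
  -- apply the contraction lemma
  have hEU := newton_unique_zero (f := Ffun Q (u^2) m4) (f' := Ffun' Q (u^2) m4)
      (A := A) (t := tc) (r := r) hrpos hAne
      (fun z _ => hasDerivAt_Ffun Q (u^2) m4 z) hd hft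
  have hzne : ∀ z : ℂ, ‖z - tc‖ < r → z ≠ 0 := by
    intro z hzr h0
    rw [h0, zero_sub, norm_neg, htcn] at hzr
    linarith
  have hiff : ∀ z : ℂ, z ≠ 0 → (DYK K x y z = 0 ↔ Ffun Q (u^2) m4 z = 0) := by
    intro z hz
    have heq := DYK_mul_z4 K x y z hz
    rw [← hudef, ← hvdef, ← hQdef, ← hm4def] at heq
    constructor
    · intro h; rw [← heq, h, zero_mul]
    · intro h
      have h' : DYK K x y z * z^4 = 0 := by rw [heq, h]
      rcases mul_eq_zero.mp h' with h''|h''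
      · exact h''
      · exact absurd h'' (pow_ne_zero 4 hz)
  obtain ⟨z₀, ⟨hz₀r, hz₀f⟩, huniq⟩ := hEU
  refine ⟨z₀, ⟨hz₀r, (hiff z₀ (hzne z₀ hz₀r)).mpr hz₀f⟩, ?_⟩
  intro z' hz'
  exact huniq z' ⟨hz'.1, (hiff z' (hzne z' hz'.1)).mp hz'.2⟩
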